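/- Orthogonal decomposition of discrete vector fields (Lemma 2.5): assume (SgnCancel): for every primary cell i and every vertex ν, the sum of t_{e,ν}·n_{e,i} over all edges e incident to both i and ν equals 0; (Euler): card C + card V = card E + 1; (KerSkew): the only dual scalar field ψ with ∇̃⊥_h ψ = 0 is ψ = 0; and (KerGrad): every primary scalar field φ with ∇_h φ = 0 is constant. Then the subspaces {u ∈ ℝ^E : ∇_h·u = 0} and {u ∈ ℝ^E : ∇̃_h×u = 0} of the space of discrete vector fields are orthogonal with respect to the diamond-weighted inner product (u, u')_0 = Σ_{e∈E} A_e u_e u'_e, and their direct sum is the whole space ℝ^E. -/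

import Mathlib

open Finset

noncomputable section

/-- A combinatorial staggered mesh: primary cells `C`, dual cells (vertices) `V`,
edges `E`, with areas, edge lengths, incidence relations and signs. -/
structure StagMesh (C V E : Type) [Fintype C] [Fintype V] [Fintype E]
    [DecidableEq C] [DecidableEq V] where
  /-- primary cell areas -/
  Ac : C → ℝ
  /-- dual cell areas -/
  Av : V → ℝ
  /-- primary edge lengths -/
  l : E → ℝ
  /-- dual edge lengths -/
  d : E → ℝ
  Ac_pos : ∀ i, 0 < Ac i
  Av_pos : ∀ ν, 0 < Av ν
  l_pos : ∀ e, 0 < l e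
  d_pos : ∀ e, 0 < d e
  /-- primary cells incident to an edge -/
  EC : E → Finset C
  /-- vertices (dual cells) incident to an edge -/
  EV : E → Finset V
  /-- sign `n_{e,i}` attached to an incident edge–cell pair -/
  n : E → C → ℝ
  /-- sign `t_{e,ν}` attached to an incident edge–vertex pair -/
  t : E → V → ℝ
  n_sign : ∀ e i, i ∈ EC e → n e i = 1 ∨ n e i = -1
  t_sign : ∀ e ν, ν ∈ EV e → t e ν = 1 ∨ t e ν = -1

namespace StagMesh

variable {C V E : Type} [Fintype C] [Fintype V] [Fintype E]
  [DecidableEq C] [DecidableEq V]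

/-- diamond area `A_e = (1/2) l_e d_e` -/
def Ae (M : StagMesh C V E) (e : E) : ℝ := (1 / 2) * M.l e * M.d e

/-- discrete gradient `[∇_h φ]_e = -(1/d_e) Σ_{i ~ e} n_{e,i} φ_i` -/
def grad (M : StagMesh C V E) (φ : C → ℝ) : E → ℝ :=
  fun e => -(1 / M.d e) * ∑ i ∈ M.EC e, M.n e i * φ i

/-- discrete skew gradient `[∇̃⊥_h ψ]_e = (1/l_e) Σ_{ν ~ e} t_{e,ν} ψ_ν` -/
def skewGrad (M : StagMesh C V E) (ψ : V → ℝ) : E → ℝ :=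
  fun e => (1 / M.l e) * ∑ ν ∈ M.EV e, M.t e ν * ψ ν

/-- discrete divergence `[∇_h·u]_i = (1/A_i) Σ_{e ~ i} l_e n_{e,i} u_e` -/
def dvg (M : StagMesh C V E) (u : E → ℝ) : C → ℝ :=
  fun i => (1 / M.Ac i) * ∑ e ∈ univ.filter (fun e => i ∈ M.EC e), M.l e * M.n e i * u e

/-- discrete curl `[∇̃_h×u]_ν = -(1/A_ν) Σ_{e ~ ν} d_e t_{e,ν} u_e` -/
def curl (M : StagMesh C V E) (u : E → ℝ) : V → ℝ :=
  fun ν => -(1 / M.Av ν) * ∑ e ∈ univ.filter (fun e => ν ∈ M.EV e), M.d e * M.t e ν * u e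

/-- area-weighted inner product on primary scalar fields -/
def innerC (M : StagMesh C V E) (φ φ' : C → ℝ) : ℝ := ∑ i, M.Ac i * φ i * φ' i

/-- area-weighted inner product on dual scalar fields -/
def innerV (M : StagMesh C V E) (ψ ψ' : V → ℝ) : ℝ := ∑ ν, M.Av ν * ψ ν * ψ' ν

/-- diamond-weighted inner product on discrete vector fields -/
def innerE (M : StagMesh C V E) (u u' : E → ℝ) : ℝ := ∑ e, M.Ae e * u e * u' e

/-- weighted `L²` norm on primary scalar fields -/
noncomputable def normC (M : StagMesh C V E) (φ : C → ℝ) : ℝ := Real.sqrt (M.innerC φ φ)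

/-- weighted `L²` norm on dual scalar fields -/
noncomputable def normV (M : StagMesh C V E) (ψ : V → ℝ) : ℝ := Real.sqrt (M.innerV ψ ψ)

/-- weighted `L²` norm on discrete vector fields -/
noncomputable def normE (M : StagMesh C V E) (u : E → ℝ) : ℝ := Real.sqrt (M.innerE u u)

/-- sign-cancellation condition: for every primary cell `i` and vertex `ν`,
`Σ_{e ~ i, e ~ ν} t_{e,ν} n_{e,i} = 0`. -/
def SgnCancel (M : StagMesh C V E) : Prop :=
  ∀ (i : C) (ν : V),
    ∑ e ∈ univ.filter (fun e => i ∈ M.EC e ∧ ν ∈ M.EV e), M.t e ν * M.n e i = 0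

end StagMesh

open StagMesh

namespace MeshAux

open StagMesh

variable {C V E : Type} [Fintype C] [Fintype V] [Fintype E]
  [DecidableEq C] [DecidableEq V] (M : StagMesh C V E)

lemma Ae_pos (e : E) : 0 < M.Ae e := by
  have h1 := M.l_pos e; have h2 := M.d_pos e
  unfold StagMesh.Ae; positivity

/-- the gradient as a linear map -/
def gradL : (C → ℝ) →ₗ[ℝ] (E → ℝ) where
  toFun := M.grad
  map_add' φ φ' := by
    funext e
    simp only [StagMesh.grad, Pi.add_apply]
    rw [show (∑ i ∈ M.EC e, M.n e i * (φ i + φ' i))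
        = (∑ i ∈ M.EC e, M.n e i * φ i) + ∑ i ∈ M.EC e, M.n e i * φ' i by
      rw [← Finset.sum_add_distrib]; exact Finset.sum_congr rfl fun i _ => by ring]
    ring
  map_smul' c φ := by
    funext e
    simp only [StagMesh.grad, Pi.smul_apply, smul_eq_mul, RingHom.id_apply]
    rw [show (∑ i ∈ M.EC e, M.n e i * (c * φ i))
        = c * ∑ i ∈ M.EC e, M.n e i * φ i by
      rw [Finset.mul_sum]; exact Finset.sum_congr rfl fun i _ => by ring]
    ring

/-- the skew gradient as a linear map -/
def skewGradL : (V → ℝ) →ₗ[ℝ] (E → ℝ) where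
  toFun := M.skewGrad
  map_add' ψ ψ' := by
    funext e
    simp only [StagMesh.skewGrad, Pi.add_apply]
    rw [show (∑ ν ∈ M.EV e, M.t e ν * (ψ ν + ψ' ν))
        = (∑ ν ∈ M.EV e, M.t e ν * ψ ν) + ∑ ν ∈ M.EV e, M.t e ν * ψ' ν by
      rw [← Finset.sum_add_distrib]; exact Finset.sum_congr rfl fun ν _ => by ring]
    ring
  map_smul' c ψ := by
    funext e
    simp only [StagMesh.skewGrad, Pi.smul_apply, smul_eq_mul, RingHom.id_apply]
    rw [show (∑ ν ∈ M.EV e, M.t e ν * (c * ψ ν))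
        = c * ∑ ν ∈ M.EV e, M.t e ν * ψ ν by
      rw [Finset.mul_sum]; exact Finset.sum_congr rfl fun ν _ => by ring]
    ring

@[simp] lemma gradL_apply (φ : C → ℝ) : gradL M φ = M.grad φ := rfl
@[simp] lemma skewGradL_apply (ψ : V → ℝ) : skewGradL M ψ = M.skewGrad ψ := rfl

/-- scaling by `√(A_e)`, an isometry from the weighted space to `ℓ²` -/
def scaleJ : (E → ℝ) ≃ₗ[ℝ] EuclideanSpace ℝ E where
  toFun u := WithLp.toLp 2 (fun e => Real.sqrt (M.Ae e) * u e)
  invFun v := fun e => v e / Real.sqrt (M.Ae e)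
  map_add' u u' := by ext e; simp [mul_add]
  map_smul' c u := by ext e; simp; ring
  left_inv u := by
    funext e
    have h : Real.sqrt (M.Ae e) ≠ 0 := (Real.sqrt_pos.mpr (Ae_pos M e)).ne'
    simp only [WithLp.ofLp_toLp]
    field_simp
  right_inv v := by
    ext e
    have h : Real.sqrt (M.Ae e) ≠ 0 := (Real.sqrt_pos.mpr (Ae_pos M e)).ne'
    simp only [WithLp.ofLp_toLp]
    field_simp

lemma innerE_eq (u u' : E → ℝ) :
    M.innerE u u' = (inner ℝ (scaleJ M u) (scaleJ M u') : ℝ) := by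
  simp only [StagMesh.innerE, PiLp.inner_apply, RCLike.inner_apply, conj_trivial]
  refine Finset.sum_congr rfl fun e _ => ?_
  have h := Real.mul_self_sqrt (le_of_lt (Ae_pos M e))
  show M.Ae e * u e * u' e = (Real.sqrt (M.Ae e) * u' e) * (Real.sqrt (M.Ae e) * u e)
  rw [mul_comm (Real.sqrt (M.Ae e) * u' e)]
  rw [show (Real.sqrt (M.Ae e) * u e) * (Real.sqrt (M.Ae e) * u' e)
      = (Real.sqrt (M.Ae e) * Real.sqrt (M.Ae e)) * (u e * u' e) by ring, h]
  ring

lemma innerE_comm (u u' : E → ℝ) : M.innerE u u' = M.innerE u' u := by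
  simp only [StagMesh.innerE]
  exact Finset.sum_congr rfl fun e _ => by ring

lemma swapEC (f : E → C → ℝ) :
    ∑ e, ∑ i ∈ M.EC e, f e i
      = ∑ i, ∑ e ∈ Finset.univ.filter (fun e => i ∈ M.EC e), f e i := by
  have h1 : ∀ e, ∑ i ∈ M.EC e, f e i = ∑ i, if i ∈ M.EC e then f e i else 0 := by
    intro e; rw [← Finset.sum_filter, Finset.filter_univ_mem]
  simp_rw [h1, Finset.sum_filter]
  exact Finset.sum_comm

lemma swapEV (f : E → V → ℝ) :
    ∑ e, ∑ ν ∈ M.EV e, f e ν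
      = ∑ ν, ∑ e ∈ Finset.univ.filter (fun e => ν ∈ M.EV e), f e ν := by
  have h1 : ∀ e, ∑ ν ∈ M.EV e, f e ν = ∑ ν, if ν ∈ M.EV e then f e ν else 0 := by
    intro e; rw [← Finset.sum_filter, Finset.filter_univ_mem]
  simp_rw [h1, Finset.sum_filter]
  exact Finset.sum_comm

lemma swapPair (ν : V) (f : E → C → ℝ) :
    ∑ e ∈ Finset.univ.filter (fun e => ν ∈ M.EV e), ∑ i ∈ M.EC e, f e i
      = ∑ i, ∑ e ∈ Finset.univ.filter (fun e => i ∈ M.EC e ∧ ν ∈ M.EV e), f e i := by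
  rw [Finset.sum_filter]
  have h1 : ∀ e, (if ν ∈ M.EV e then ∑ i ∈ M.EC e, f e i else 0)
      = ∑ i, if i ∈ M.EC e ∧ ν ∈ M.EV e then f e i else 0 := by
    intro e
    by_cases hν : ν ∈ M.EV e
    · simp only [hν, if_true, and_true]
      rw [← Finset.sum_filter, Finset.filter_univ_mem]
    · simp [hν]
  simp_rw [h1]
  rw [Finset.sum_comm]
  simp_rw [Finset.sum_filter]

/-- discrete integration by parts for the gradient -/
lemma inner_grad (u : E → ℝ) (φ : C → ℝ) :
    M.innerE u (M.grad φ) = -(1/2) * M.innerC (M.dvg u) φ := by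
  simp only [StagMesh.innerE, StagMesh.grad, StagMesh.innerC, StagMesh.dvg, StagMesh.Ae]
  have hL : ∀ e : E, 1 / 2 * M.l e * M.d e * u e *
        (-(1 / M.d e) * ∑ i ∈ M.EC e, M.n e i * φ i)
      = ∑ i ∈ M.EC e, -(1/2) * (M.l e * M.n e i * u e) * φ i := by
    intro e
    rw [show (-(1 / M.d e) * ∑ i ∈ M.EC e, M.n e i * φ i)
        = ∑ i ∈ M.EC e, -(1 / M.d e) * (M.n e i * φ i) from Finset.mul_sum _ _ _,
      Finset.mul_sum]
    refine Finset.sum_congr rfl fun i _ => ?_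
    have hd : M.d e ≠ 0 := (M.d_pos e).ne'
    field_simp
  simp_rw [hL]
  rw [swapEC]
  rw [Finset.mul_sum]
  refine Finset.sum_congr rfl fun i _ => ?_
  have hA : M.Ac i ≠ 0 := (M.Ac_pos i).ne'
  rw [show (∑ e ∈ Finset.univ.filter (fun e => i ∈ M.EC e),
        -(1/2) * (M.l e * M.n e i * u e) * φ i)
      = -(1/2) * φ i * ∑ e ∈ Finset.univ.filter (fun e => i ∈ M.EC e),
        M.l e * M.n e i * u e by
    rw [Finset.mul_sum]; exact Finset.sum_congr rfl fun e _ => by ring]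
  field_simp

/-- discrete integration by parts for the skew gradient -/
lemma inner_skew (ψ : V → ℝ) (u : E → ℝ) :
    M.innerE (M.skewGrad ψ) u = -(1/2) * M.innerV ψ (M.curl u) := by
  simp only [StagMesh.innerE, StagMesh.skewGrad, StagMesh.innerV, StagMesh.curl, StagMesh.Ae]
  have hL : ∀ e : E, 1 / 2 * M.l e * M.d e *
        ((1 / M.l e) * ∑ ν ∈ M.EV e, M.t e ν * ψ ν) * u e
      = ∑ ν ∈ M.EV e, (1/2) * (M.d e * M.t e ν * u e) * ψ ν := by
    intro e
    rw [show 1 / 2 * M.l e * M.d e *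
          ((1 / M.l e) * ∑ ν ∈ M.EV e, M.t e ν * ψ ν) * u e
        = (1 / 2 * M.l e * M.d e * (1 / M.l e) * u e)
          * ∑ ν ∈ M.EV e, M.t e ν * ψ ν from by ring,
      Finset.mul_sum]
    refine Finset.sum_congr rfl fun ν _ => ?_
    have hl : M.l e ≠ 0 := (M.l_pos e).ne'
    field_simp
  simp_rw [hL]
  rw [swapEV]
  rw [Finset.mul_sum]
  refine Finset.sum_congr rfl fun ν _ => ?_
  have hA : M.Av ν ≠ 0 := (M.Av_pos ν).ne'
  rw [show (∑ e ∈ Finset.univ.filter (fun e => ν ∈ M.EV e),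
        (1/2) * (M.d e * M.t e ν * u e) * ψ ν)
      = (1/2) * ψ ν * ∑ e ∈ Finset.univ.filter (fun e => ν ∈ M.EV e),
        M.d e * M.t e ν * u e by
    rw [Finset.mul_sum]; exact Finset.sum_congr rfl fun e _ => by ring]
  field_simp

lemma curl_grad (hsc : M.SgnCancel) (φ : C → ℝ) : M.curl (M.grad φ) = 0 := by
  funext ν
  simp only [StagMesh.curl, StagMesh.grad, Pi.zero_apply]
  have hL : ∀ e : E, M.d e * M.t e ν * (-(1 / M.d e) * ∑ i ∈ M.EC e, M.n e i * φ i)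
      = ∑ i ∈ M.EC e, -((M.t e ν * M.n e i) * φ i) := by
    intro e
    rw [show (-(1 / M.d e) * ∑ i ∈ M.EC e, M.n e i * φ i)
        = ∑ i ∈ M.EC e, -(1 / M.d e) * (M.n e i * φ i) from Finset.mul_sum _ _ _,
      Finset.mul_sum]
    refine Finset.sum_congr rfl fun i _ => ?_
    have hd : M.d e ≠ 0 := (M.d_pos e).ne'
    field_simp
  simp_rw [hL]
  rw [swapPair]
  have : ∀ i : C, ∑ e ∈ Finset.univ.filter (fun e => i ∈ M.EC e ∧ ν ∈ M.EV e),
      -((M.t e ν * M.n e i) * φ i) = 0 := by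
    intro i
    rw [show (∑ e ∈ Finset.univ.filter (fun e => i ∈ M.EC e ∧ ν ∈ M.EV e),
        -((M.t e ν * M.n e i) * φ i))
        = -φ i * ∑ e ∈ Finset.univ.filter (fun e => i ∈ M.EC e ∧ ν ∈ M.EV e),
          M.t e ν * M.n e i by
      rw [Finset.mul_sum]; exact Finset.sum_congr rfl fun e _ => by ring]
    rw [hsc i ν]
    ring
  simp_rw [this]
  simp

lemma innerC_self (φ : C → ℝ) (h : M.innerC φ φ = 0) : φ = 0 := by
  funext i
  have hterm : ∀ j ∈ Finset.univ, (0:ℝ) ≤ M.Ac j * φ j * φ j := fun j _ => by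
    have := M.Ac_pos j; nlinarith [sq_nonneg (φ j)]
  have hi := (Finset.sum_eq_zero_iff_of_nonneg hterm).mp h i (Finset.mem_univ i)
  have hA : M.Ac i ≠ 0 := (M.Ac_pos i).ne'
  show φ i = 0
  rcases mul_eq_zero.mp hi with h' | h'
  · rcases mul_eq_zero.mp h' with h'' | h''
    · exact absurd h'' hA
    · exact h''
  · exact h'

lemma innerV_self (ψ : V → ℝ) (h : M.innerV ψ ψ = 0) : ψ = 0 := by
  funext ν
  have hterm : ∀ μ ∈ Finset.univ, (0:ℝ) ≤ M.Av μ * ψ μ * ψ μ := fun μ _ => by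
    have := M.Av_pos μ; nlinarith [sq_nonneg (ψ μ)]
  have hi := (Finset.sum_eq_zero_iff_of_nonneg hterm).mp h ν (Finset.mem_univ ν)
  have hA : M.Av ν ≠ 0 := (M.Av_pos ν).ne'
  show ψ ν = 0
  rcases mul_eq_zero.mp hi with h' | h'
  · rcases mul_eq_zero.mp h' with h'' | h''
    · exact absurd h'' hA
    · exact h''
  · exact h'

end MeshAux


/-- orthogonal decomposition of discrete vector fields: the
divergence-free fields and the curl-free fields are orthogonal for the
diamond-weighted inner product, and every discrete vector field splits uniquely
as the sum of a divergence-free and a curl-free field. -/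
theorem orthogonal_decomposition
    {C V E : Type} [Fintype C] [Fintype V] [Fintype E]
    [DecidableEq C] [DecidableEq V]
    (M : StagMesh C V E)
    (hsc : M.SgnCancel)
    (heuler : Fintype.card C + Fintype.card V = Fintype.card E + 1)
    (hks : ∀ ψ : V → ℝ, M.skewGrad ψ = 0 → ψ = 0)
    (hkg : ∀ φ : C → ℝ, M.grad φ = 0 → ∀ i j : C, φ i = φ j) :
    (∀ u u' : E → ℝ, M.dvg u = 0 → M.curl u' = 0 → M.innerE u u' = 0) ∧
    (∀ u : E → ℝ, ∃! p : (E → ℝ) × (E → ℝ),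
      M.dvg p.1 = 0 ∧ M.curl p.2 = 0 ∧ u = p.1 + p.2) := by
  classical
  set J := MeshAux.scaleJ M with hJ
  set SG : Submodule ℝ (EuclideanSpace ℝ E) :=
    LinearMap.range (J.toLinearMap ∘ₗ MeshAux.skewGradL M) with hSGdef
  set GG : Submodule ℝ (EuclideanSpace ℝ E) :=
    LinearMap.range (J.toLinearMap ∘ₗ MeshAux.gradL M) with hGGdef
  -- membership descriptions
  have hSGmem : ∀ x, x ∈ SG ↔ ∃ ψ : V → ℝ, J (M.skewGrad ψ) = x := by
    intro x
    rw [hSGdef, LinearMap.mem_range]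
    constructor
    · rintro ⟨ψ, hψ⟩; exact ⟨ψ, hψ⟩
    · rintro ⟨ψ, hψ⟩; exact ⟨ψ, hψ⟩
  have hGGmem : ∀ x, x ∈ GG ↔ ∃ φ : C → ℝ, J (M.grad φ) = x := by
    intro x
    rw [hGGdef, LinearMap.mem_range]
    constructor
    · rintro ⟨φ, hφ⟩; exact ⟨φ, hφ⟩
    · rintro ⟨φ, hφ⟩; exact ⟨φ, hφ⟩
  -- characterization of divergence-free fields
  have hdiv : ∀ u : E → ℝ, M.dvg u = 0 ↔ J u ∈ GGᗮ := by
    intro u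
    constructor
    · intro h
      rw [Submodule.mem_orthogonal]
      intro y hy
      obtain ⟨φ, rfl⟩ := (hGGmem y).mp hy
      rw [← MeshAux.innerE_eq, MeshAux.innerE_comm, MeshAux.inner_grad, h]
      simp [StagMesh.innerC]
    · intro h
      apply MeshAux.innerC_self M
      have h0 : (inner ℝ (J (M.grad (M.dvg u))) (J u) : ℝ) = 0 :=
        (Submodule.mem_orthogonal _ _).mp h _ ((hGGmem _).mpr ⟨M.dvg u, rfl⟩)
      rw [← MeshAux.innerE_eq, MeshAux.innerE_comm, MeshAux.inner_grad] at h0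
      linarith
  -- characterization of curl-free fields
  have hcurl : ∀ u : E → ℝ, M.curl u = 0 ↔ J u ∈ SGᗮ := by
    intro u
    constructor
    · intro h
      rw [Submodule.mem_orthogonal]
      intro y hy
      obtain ⟨ψ, rfl⟩ := (hSGmem y).mp hy
      rw [← MeshAux.innerE_eq, MeshAux.inner_skew, h]
      simp [StagMesh.innerV]
    · intro h
      apply MeshAux.innerV_self M
      have h0 : (inner ℝ (J (M.skewGrad (M.curl u))) (J u) : ℝ) = 0 :=
        (Submodule.mem_orthogonal _ _).mp h _ ((hSGmem _).mpr ⟨M.curl u, rfl⟩)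
      rw [← MeshAux.innerE_eq, MeshAux.inner_skew] at h0
      linarith
  -- GG is orthogonal to SG
  have hGGle : GG ≤ SGᗮ := by
    intro x hx
    obtain ⟨φ, rfl⟩ := (hGGmem x).mp hx
    exact (hcurl (M.grad φ)).mp (MeshAux.curl_grad M hsc φ)
  -- dimension count
  have hrkSG : Module.finrank ℝ SG = Fintype.card V := by
    have hinj : Function.Injective (J.toLinearMap ∘ₗ MeshAux.skewGradL M) := by
      apply Function.Injective.comp J.injective
      have hker0 : LinearMap.ker (MeshAux.skewGradL M) = ⊥ := by
        rw [LinearMap.ker_eq_bot']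
        intro ψ hψ
        exact hks ψ hψ
      exact LinearMap.ker_eq_bot.mp hker0
    rw [hSGdef, LinearMap.finrank_range_of_inj hinj, Module.finrank_pi]
  have hWrk : Module.finrank ℝ (EuclideanSpace ℝ E) = Fintype.card E :=
    finrank_euclideanSpace
  have hVE : Fintype.card V ≤ Fintype.card E := by
    rw [← hrkSG, ← hWrk]
    exact Submodule.finrank_le SG
  have hCpos : 0 < Fintype.card C := by omega
  have hCne : Nonempty C := Fintype.card_pos_iff.mp hCpos
  obtain ⟨j0⟩ := hCne
  -- kernel of the gradient has dimension at most one
  have hker : LinearMap.ker (J.toLinearMap ∘ₗ MeshAux.gradL M)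
      ≤ Submodule.span ℝ {(fun _ => (1:ℝ) : C → ℝ)} := by
    intro φ hφ
    rw [LinearMap.mem_ker] at hφ
    have hg : M.grad φ = 0 := by
      have : J (M.grad φ) = 0 := hφ
      have := congrArg J.symm this
      rwa [J.symm_apply_apply, map_zero] at this
    have hc := hkg φ hg
    rw [Submodule.mem_span_singleton]
    refine ⟨φ j0, ?_⟩
    funext i
    have : φ i = φ j0 := hc i j0
    simp only [Pi.smul_apply, smul_eq_mul, mul_one]
    exact this.symm
  have hkerle : Module.finrank ℝ (LinearMap.ker (J.toLinearMap ∘ₗ MeshAux.gradL M)) ≤ 1 := by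
    refine le_trans (Submodule.finrank_mono hker) ?_
    by_cases h1 : (fun _ => (1:ℝ) : C → ℝ) = 0
    · rw [h1, Submodule.span_zero_singleton]
      simp [finrank_bot]
    · rw [finrank_span_singleton h1]
  have hrn := LinearMap.finrank_range_add_finrank_ker (J.toLinearMap ∘ₗ MeshAux.gradL M)
  rw [Module.finrank_pi] at hrn
  have hrkOrth : Module.finrank ℝ SG + Module.finrank ℝ SGᗮ
      = Fintype.card E := by
    rw [← hWrk]; exact Submodule.finrank_add_finrank_orthogonal SG
  -- GG equals the orthogonal complement of SG
  have hGGeq : GG = SGᗮ := by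
    apply Submodule.eq_of_le_of_finrank_le hGGle
    rw [← hGGdef] at hrn
    omega
  have hSGeq : GGᗮ = SG := by
    rw [hGGeq, Submodule.orthogonal_orthogonal]
  constructor
  · intro u u' hu hu'
    have h1 : J u ∈ SG := hSGeq ▸ (hdiv u).mp hu
    have h2 : J u' ∈ SGᗮ := (hcurl u').mp hu'
    rw [MeshAux.innerE_eq]
    exact (Submodule.mem_orthogonal _ _).mp h2 _ h1
  · intro u
    obtain ⟨y, hy, z, hz, hv⟩ := SG.exists_add_mem_mem_orthogonal (J u)
    refine ⟨(J.symm y, J.symm z), ⟨?_, ?_, ?_⟩, ?_⟩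
    · rw [hdiv, J.apply_symm_apply, hSGeq]; exact hy
    · rw [hcurl, J.apply_symm_apply]; exact hz
    · apply J.injective
      rw [map_add, J.apply_symm_apply, J.apply_symm_apply, hv]
    · rintro ⟨q1, q2⟩ ⟨hq1, hq2, hq3⟩
      have hJ1 : J q1 ∈ SG := hSGeq ▸ (hdiv q1).mp hq1
      have hJ2 : J q2 ∈ SGᗮ := (hcurl q2).mp hq2
      have hsum : J q1 + J q2 = y + z := by
        rw [← map_add, ← hq3, hv]
      have hd : J q1 - y = z - J q2 := by
        have := hsum
        abel_nf
        linear_combination (norm := abel) hsum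
      have hmem : J q1 - y ∈ SG ⊓ SGᗮ := by
        refine Submodule.mem_inf.mpr ⟨Submodule.sub_mem _ hJ1 hy, ?_⟩
        rw [hd]
        exact Submodule.sub_mem _ hz hJ2
      rw [SG.inf_orthogonal_eq_bot, Submodule.mem_bot] at hmem
      have h1 : J q1 = y := by
        have := sub_eq_zero.mp hmem; exact this
      have h2 : J q2 = z := by
        have : J q2 = y + z - J q1 := by rw [← hsum]; abel
        rw [this, h1]; abel
      have e1 : q1 = J.symm y := by rw [← h1, J.symm_apply_apply]
      have e2 : q2 = J.symm z := by rw [← h2, J.symm_apply_apply]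
      exact Prod.ext e1 e2
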